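/- Let 𝓗' be a d-uniform hypergraph (d ≥ 2) whose vertex set is a subset of a linearly ordered set, such that every edge is contained in a window of d+1 consecutive positions. Then every connected component 𝒲 of 𝓗' (on its non-isolated vertices) satisfies e(𝒲) ≤ d(|V(𝒲)| − d) + 1, where V(𝒲) denotes the set of non-isolated vertices of the component. -/

import Mathlib

open scoped Classical

/-- Let E be a d-uniform hypergraph on a subset of ℤ each of whose edges lies in a
window of d+1 consecutive positions. Then the connected component containing any
vertex v₀ (the edges all of whose vertices are reachable from v₀) satisfies
e(𝒲) ≤ d(|V(𝒲)| − d) + 1, where V(𝒲) is the set of non-isolated vertices of the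
component. -/
theorem stmt_15 (d : ℕ) (hd : 2 ≤ d) (E : Finset (Finset ℤ))
    (hunif : ∀ S ∈ E, S.card = d)
    (hwin : ∀ S ∈ E, ∃ a : ℤ, S ⊆ Finset.Icc a (a + (d : ℤ)))
    (v₀ : ℤ) :
    (E.filter (fun S => ∀ v ∈ S,
        Relation.ReflTransGen (fun u w => ∃ T ∈ E, u ∈ T ∧ w ∈ T) v₀ v)).card
      ≤ d * (((E.filter (fun S => ∀ v ∈ S,
          Relation.ReflTransGen (fun u w => ∃ T ∈ E, u ∈ T ∧ w ∈ T) v₀ v)).sup id).card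
            - d) + 1 := by
  set W := E.filter (fun S => ∀ v ∈ S,
      Relation.ReflTransGen (fun u w => ∃ T ∈ E, u ∈ T ∧ w ∈ T) v₀ v) with hWdef
  set V := W.sup id with hVdef
  rcases W.eq_empty_or_nonempty with hW | hWne
  · simp [hW]
  -- basic facts
  have hcard : ∀ S ∈ W, S.card = d := by
    intro S hS
    exact hunif S (Finset.mem_filter.mp hS).1
  have hne : ∀ S ∈ W, S.Nonempty := by
    intro S hS
    rw [← Finset.card_pos, hcard S hS]; omega
  have hSV : ∀ S ∈ W, S ⊆ V := by
    intro S hS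
    exact Finset.le_sup (f := id) hS
  -- M S : the maximum of S
  set M : Finset ℤ → ℤ := fun S => WithBot.unbotD 0 S.max with hMdef
  have hMeq : ∀ (S : Finset ℤ) (hS : S ∈ W), M S = S.max' (hne S hS) := by
    intro S hS
    simp only [hMdef, ← Finset.coe_max' (hne S hS), WithBot.unbotD_coe]
  have hMmem : ∀ S ∈ W, M S ∈ S := by
    intro S hS
    rw [hMeq S hS]
    exact S.max'_mem _
  have hMle : ∀ S ∈ W, ∀ x ∈ S, x ≤ M S := by
    intro S hS x hx
    rw [hMeq S hS]
    exact S.le_max' x hx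
  have hWin : ∀ S ∈ W, S ⊆ Finset.Icc (M S - d) (M S) := by
    intro S hS x hx
    obtain ⟨a, ha⟩ := hwin S (Finset.mem_filter.mp hS).1
    have hxa := ha hx
    have hMa := ha (hMmem S hS)
    have hxM := hMle S hS x hx
    simp only [Finset.mem_Icc] at *
    omega
  -- fiberwise count by maximum
  have key1 : W.card = ∑ v ∈ V, (W.filter (fun S => M S = v)).card :=
    Finset.card_eq_sum_card_fiberwise (fun S hS => hSV S hS (hMmem S hS))
  have hdV : d ≤ V.card := by
    obtain ⟨S0, hS0⟩ := hWne
    calc d = S0.card := (hcard S0 hS0).symm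
    _ ≤ V.card := Finset.card_le_card (hSV S0 hS0)
  have hVne : V.Nonempty := Finset.card_pos.mp (by omega)
  -- the pivot vertex t : the d-th smallest element of V
  set B := V.filter (fun v => d ≤ (V.filter (· ≤ v)).card) with hBdef
  have hBne : B.Nonempty := by
    refine ⟨V.max' hVne, ?_⟩
    rw [hBdef, Finset.mem_filter]
    refine ⟨V.max'_mem hVne, ?_⟩
    have : V.filter (· ≤ V.max' hVne) = V := by
      apply Finset.filter_true_of_mem
      intro x hx; exact V.le_max' x hx
    rw [this]; exact hdV
  set t := B.min' hBne with htdef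
  have htB : t ∈ B := B.min'_mem hBne
  have htV : t ∈ V := (Finset.mem_filter.mp htB).1
  have htcard : d ≤ (V.filter (· ≤ t)).card := (Finset.mem_filter.mp htB).2
  have hlt : ∀ v ∈ V, v < t → (V.filter (· ≤ v)).card < d := by
    intro v hv hvt
    by_contra h
    have : v ∈ B := by
      rw [hBdef, Finset.mem_filter]; exact ⟨hv, by omega⟩
    exact absurd (B.min'_le v this) (by omega)
  have hltcard : (V.filter (· < t)).card < d := by
    rcases (V.filter (· < t)).eq_empty_or_nonempty with h | h
    · rw [h]; simpa using (by omega : 0 < d)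
    · set v' := (V.filter (· < t)).max' h with hv'
      have hv'mem := (V.filter (· < t)).max'_mem h
      rw [Finset.mem_filter] at hv'mem
      have hsub : V.filter (· < t) ⊆ V.filter (· ≤ v') := by
        intro x hx
        rw [Finset.mem_filter] at hx ⊢
        exact ⟨hx.1, (V.filter (· < t)).le_max' x (Finset.mem_filter.mpr hx)⟩
      calc (V.filter (· < t)).card ≤ (V.filter (· ≤ v')).card := Finset.card_le_card hsub
      _ < d := hlt v' hv'mem.1 hv'mem.2
  have hfeq : V.filter (· ≤ t) = insert t (V.filter (· < t)) := by
    ext x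
    simp only [Finset.mem_filter, Finset.mem_insert]
    constructor
    · rintro ⟨hx, hxt⟩
      rcases eq_or_lt_of_le hxt with h | h
      · exact Or.inl h
      · exact Or.inr ⟨hx, h⟩
    · rintro (rfl | ⟨hx, hxt⟩)
      · exact ⟨htV, le_refl _⟩
      · exact ⟨hx, le_of_lt hxt⟩
  have htnotmem : t ∉ V.filter (· < t) := by
    simp [Finset.mem_filter]
  have htcard' : (V.filter (· ≤ t)).card = d := by
    have h := htcard
    rw [hfeq, Finset.card_insert_of_notMem htnotmem] at h ⊢
    omega
  have hgtcard : (V.filter (fun v => ¬ v ≤ t)).card = V.card - d := by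
    have := Finset.card_filter_add_card_filter_not (s := V) (p := (· ≤ t))
    omega
  -- fiber bounds
  have hfib0 : ∀ v ∈ V, v < t → (W.filter (fun S => M S = v)) = ∅ := by
    intro v hv hvt
    rw [Finset.eq_empty_iff_forall_notMem]
    intro S hS
    rw [Finset.mem_filter] at hS
    obtain ⟨hSW, hSM⟩ := hS
    have hsub : S ⊆ V.filter (· ≤ v) := by
      intro x hx
      rw [Finset.mem_filter]
      exact ⟨hSV S hSW hx, hSM ▸ hMle S hSW x hx⟩
    have := Finset.card_le_card hsub
    rw [hcard S hSW] at this
    have := hlt v hv hvt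
    omega
  have hfibt : (W.filter (fun S => M S = t)).card ≤ 1 := by
    rw [Finset.card_le_one]
    have key : ∀ S ∈ W.filter (fun S => M S = t), S = V.filter (· ≤ t) := by
      intro S hS
      rw [Finset.mem_filter] at hS
      obtain ⟨hSW, hSM⟩ := hS
      have hsub : S ⊆ V.filter (· ≤ t) := by
        intro x hx
        rw [Finset.mem_filter]
        exact ⟨hSV S hSW hx, hSM ▸ hMle S hSW x hx⟩
      exact Finset.eq_of_subset_of_card_le hsub (by rw [htcard', hcard S hSW])
    intro S hS S' hS'
    rw [key S hS, key S' hS']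
  have hfibd : ∀ v : ℤ, (W.filter (fun S => M S = v)).card ≤ d := by
    intro v
    have hinj : ∀ S ∈ W.filter (fun S => M S = v),
        S.erase v ∈ (Finset.Icc (v - d) (v - 1)).powersetCard (d - 1) := by
      intro S hS
      rw [Finset.mem_filter] at hS
      obtain ⟨hSW, hSM⟩ := hS
      have hvS : v ∈ S := hSM ▸ hMmem S hSW
      rw [Finset.mem_powersetCard]
      constructor
      · intro x hx
        have hx' := Finset.mem_of_mem_erase hx
        have hxv : x ≠ v := Finset.ne_of_mem_erase hx
        have := hWin S hSW hx'
        rw [hSM, Finset.mem_Icc] at this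
        rw [Finset.mem_Icc]
        omega
      · rw [Finset.card_erase_of_mem hvS, hcard S hSW]
    have hcardinj : (W.filter (fun S => M S = v)).card ≤
        ((Finset.Icc (v - d) (v - 1)).powersetCard (d - 1)).card := by
      apply Finset.card_le_card_of_injOn (fun S => S.erase v) (fun S hS => hinj S hS)
      intro S hS S' hS' heq
      simp only [Finset.coe_filter, Set.mem_setOf_eq] at hS hS'
      have hvS : v ∈ S := hS.2 ▸ hMmem S hS.1
      have hvS' : v ∈ S' := hS'.2 ▸ hMmem S' hS'.1
      rw [← Finset.insert_erase hvS, ← Finset.insert_erase hvS']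
      exact congrArg (insert v) heq
    have hIcc : (Finset.Icc (v - d) (v - 1)).card = d := by
      rw [Int.card_Icc]
      omega
    rw [Finset.card_powersetCard, hIcc] at hcardinj
    have hch : d.choose (d - 1) = d := by
      rw [Nat.choose_symm (by omega : 1 ≤ d), Nat.choose_one_right]
    omega
  -- assemble
  have h1 : ∑ v ∈ V.filter (· ≤ t), (W.filter (fun S => M S = v)).card ≤ 1 := by
    rw [hfeq, Finset.sum_insert htnotmem]
    have h0 : ∑ v ∈ V.filter (· < t), (W.filter (fun S => M S = v)).card = 0 := by
      apply Finset.sum_eq_zero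
      intro v hv
      rw [Finset.mem_filter] at hv
      rw [hfib0 v hv.1 hv.2, Finset.card_empty]
    omega
  have h2 : ∑ v ∈ V.filter (fun v => ¬ v ≤ t), (W.filter (fun S => M S = v)).card
      ≤ (V.card - d) * d := by
    calc ∑ v ∈ V.filter (fun v => ¬ v ≤ t), (W.filter (fun S => M S = v)).card
        ≤ ∑ _v ∈ V.filter (fun v => ¬ v ≤ t), d :=
          Finset.sum_le_sum (fun v _ => hfibd v)
      _ = (V.card - d) * d := by rw [Finset.sum_const, smul_eq_mul, hgtcard]
  have hsum : ∑ v ∈ V, (W.filter (fun S => M S = v)).card ≤ 1 + (V.card - d) * d := by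
    conv_lhs => rw [← Finset.filter_union_filter_not_eq (p := (· ≤ t)) V,
      Finset.sum_union (Finset.disjoint_filter_filter_not V V (· ≤ t))]
    omega
  have hcomm : (V.card - d) * d = d * (V.card - d) := Nat.mul_comm _ _
  omega
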